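/- Let a, b > 0, c² = a² + b², let Φ be the standard normal distribution function, and for K ∈ ℝ define G(z) = Φ((c/(ab))·(z − a²K/c²)) − Φ(z/a). Then G attains its minimum over ℝ at z_min = K − (b/c)√(K² + c² log(c²/b²)), and the minimum value plus 1 equals Φ(bK/(ac) − R_K/a) + Φ(−K/a + bR_K/(ac)), where R_K = √(K² + c² log(c²/b²)); moreover this value lies strictly between 0 and 1. -/

import Mathlib

noncomputable section

/-- Standard normal distribution function. -/
def Phi (x : ℝ) : ℝ := ∫ t in Set.Iic x, Real.exp (-t ^ 2 / 2) / Real.sqrt (2 * Real.pi)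

open Real MeasureTheory Set Filter Topology intervalIntegral

namespace Stmt16Aux

def f (t : ℝ) : ℝ := Real.exp (-t ^ 2 / 2) / Real.sqrt (2 * Real.pi)

lemma f_pos (t : ℝ) : 0 < f t := div_pos (Real.exp_pos _) (Real.sqrt_pos.2 (by positivity))

lemma f_cont : Continuous f := by unfold f; fun_prop

lemma f_integrable : Integrable f := by
  have h : Integrable (fun t : ℝ => Real.exp (-(1/2) * t ^ 2)) := integrable_exp_neg_mul_sq (by norm_num)
  have := h.div_const (Real.sqrt (2 * Real.pi))
  convert this using 2 with t
  unfold f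
  ring_nf

lemma integral_f : ∫ t, f t = 1 := by
  have h : ∫ t : ℝ, Real.exp (-(1/2) * t ^ 2) = Real.sqrt (Real.pi / (1/2)) := integral_gaussian (1/2)
  have h2 : ∫ t, f t = (∫ t : ℝ, Real.exp (-(1/2) * t ^ 2)) / Real.sqrt (2 * Real.pi) := by
    rw [← MeasureTheory.integral_div]
    congr 1 with t
    unfold f; ring_nf
  rw [h2, h]
  rw [show Real.pi / (1/2) = 2 * Real.pi by ring]
  exact div_self (by positivity)

lemma Phi_eq (x : ℝ) : Phi x = ∫ t in Iic x, f t := rfl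

lemma Phi_sub_Phi (x y : ℝ) : Phi y - Phi x = ∫ t in x..y, f t := by
  rw [Phi_eq, Phi_eq]
  exact integral_Iic_sub_Iic f_integrable.integrableOn f_integrable.integrableOn

lemma hasDerivAt_Phi (x : ℝ) : HasDerivAt Phi (f x) x := by
  have h : HasDerivAt (fun y => Phi 0 + ∫ t in (0:ℝ)..y, f t) (f x) x := by
    refine HasDerivAt.const_add _ ?_
    refine intervalIntegral.integral_hasDerivAt_right (f_integrable.intervalIntegrable)
      (f_cont.stronglyMeasurableAtFilter _ _) f_cont.continuousAt
  refine h.congr_of_eventuallyEq (Eventually.of_forall fun y => ?_)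
  show Phi y = Phi 0 + ∫ t in (0:ℝ)..y, f t
  have := Phi_sub_Phi 0 y
  linarith

lemma Phi_continuous : Continuous Phi :=
  continuous_iff_continuousAt.2 fun x => (hasDerivAt_Phi x).continuousAt

lemma Phi_lt_Phi {x y : ℝ} (h : x < y) : Phi x < Phi y := by
  have h2 : 0 < ∫ t in x..y, f t :=
    intervalIntegral.intervalIntegral_pos_of_pos (f_integrable.intervalIntegrable) f_pos h
  have := Phi_sub_Phi x y
  linarith

lemma Phi_nonneg (x : ℝ) : 0 ≤ Phi x := by
  rw [Phi_eq]
  exact setIntegral_nonneg measurableSet_Iic fun t _ => (f_pos t).le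

lemma Phi_pos (x : ℝ) : 0 < Phi x := lt_of_le_of_lt (Phi_nonneg (x-1)) (Phi_lt_Phi (by linarith))

lemma tendsto_Phi_atTop : Tendsto Phi atTop (𝓝 1) := by
  have h : Tendsto (fun y => ∫ t in (0:ℝ)..y, f t) atTop (𝓝 (∫ t in Ioi 0, f t)) :=
    intervalIntegral_tendsto_integral_Ioi 0 f_integrable.integrableOn tendsto_id
  have h2 : Phi 0 + ∫ t in Ioi 0, f t = 1 := by
    rw [Phi_eq, integral_Iic_add_Ioi f_integrable.integrableOn f_integrable.integrableOn, integral_f]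
  have h3 : Tendsto (fun y => Phi 0 + ∫ t in (0:ℝ)..y, f t) atTop (𝓝 (Phi 0 + ∫ t in Ioi 0, f t)) :=
    tendsto_const_nhds.add h
  rw [h2] at h3
  refine h3.congr fun y => ?_
  have := Phi_sub_Phi 0 y
  linarith

lemma Phi_neg (x : ℝ) : Phi (-x) = 1 - Phi x := by
  have h1 : Phi (-x) = ∫ t in Ioi x, f t := by
    rw [Phi_eq, ← integral_comp_neg_Ioi]
    congr 1 with t
    unfold f; rw [neg_pow]; ring_nf
  have h2 : Phi x + ∫ t in Ioi x, f t = 1 := by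
    rw [Phi_eq, integral_Iic_add_Ioi f_integrable.integrableOn f_integrable.integrableOn, integral_f]
  linarith

end Stmt16Aux


open Stmt16Aux in
/-- with `c² = a² + b²` and
`G(z) = Φ((c/(ab))(z − a²K/c²)) − Φ(z/a)`, the function `G` attains its minimum at
`z_min = K − (b/c)√(K² + c² log(c²/b²))`, the minimum value plus 1 equals
`Φ(bK/(ac) − R_K/a) + Φ(−K/a + bR_K/(ac))`, and this value is strictly between 0 and 1. -/
theorem stmt16 (a b K : ℝ) (ha : 0 < a) (hb : 0 < b) :
    let c := Real.sqrt (a ^ 2 + b ^ 2)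
    let R := Real.sqrt (K ^ 2 + c ^ 2 * Real.log (c ^ 2 / b ^ 2))
    let G : ℝ → ℝ := fun z => Phi (c / (a * b) * (z - a ^ 2 * K / c ^ 2)) - Phi (z / a)
    let zmin := K - b / c * R
    (∀ z : ℝ, G zmin ≤ G z) ∧
    (G zmin + 1 = Phi (b * K / (a * c) - R / a) + Phi (-(K / a) + b * R / (a * c))) ∧
    (0 < G zmin + 1 ∧ G zmin + 1 < 1) := by
  intro c R G zmin
  have ha' := ha.ne'
  have hb' := hb.ne'
  have hc : 0 < c := Real.sqrt_pos.2 (by positivity)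
  have hc' := hc.ne'
  have hc2 : c ^ 2 = a ^ 2 + b ^ 2 := Real.sq_sqrt (by positivity)
  have hcb : b < c := by nlinarith
  have hL : 0 < Real.log (c ^ 2 / b ^ 2) :=
    Real.log_pos (by rw [one_lt_div (by positivity)]; nlinarith)
  have hR2 : R ^ 2 = K ^ 2 + c ^ 2 * Real.log (c ^ 2 / b ^ 2) :=
    Real.sq_sqrt (by nlinarith [sq_nonneg K, mul_pos (pow_pos hc 2) hL])
  have hR0 : 0 ≤ R := Real.sqrt_nonneg _
  have hRK : -K < R := by nlinarith [mul_pos (pow_pos hc 2) hL]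
  set m := c / (a * b) with hm
  set d := a ^ 2 * K / c ^ 2 with hd
  have hm0 : 0 < m := by rw [hm]; positivity
  have hzmin_eq : zmin = K - b / c * R := rfl
  set zmax := K + b / c * R with hzmax
  have hzminmax' : zmin ≤ zmax := by
    rw [hzmin_eq, hzmax]
    have : 0 ≤ b / c * R := by positivity
    linarith
  have hGfun : G = fun z => Phi (m * (z - d)) - Phi (z / a) := by
    funext z
    show Phi (c / (a * b) * (z - a ^ 2 * K / c ^ 2)) - Phi (z / a) = _
    rw [hm, hd]
  have hG : ∀ z, HasDerivAt G (f (m * (z - d)) * m - f (z / a) * (1 / a)) z := by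
    intro z
    rw [hGfun]
    have h1 : HasDerivAt (fun z : ℝ => m * (z - d)) m z := by
      simpa using ((hasDerivAt_id z).sub_const d).const_mul m
    have h2 : HasDerivAt (fun z : ℝ => z / a) (1 / a) z := by
      simpa using (hasDerivAt_id z).div_const a
    have h3 := (hasDerivAt_Phi (m * (z - d))).comp z h1
    have h4 := (hasDerivAt_Phi (z / a)).comp z h2
    exact h3.sub h4
  have key : ∀ z, ((z / a) ^ 2 - (m * (z - d)) ^ 2 + Real.log (c ^ 2 / b ^ 2)) * b ^ 2
      = (z - zmin) * (zmax - z) := by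
    intro z
    rw [hm, hd, hzmin_eq, hzmax]
    field_simp
    linear_combination (a ^ 2 * K ^ 2 - z ^ 2 * c ^ 2) * hc2 + (-(a ^ 2 * b ^ 2)) * hR2
  have hs : (0:ℝ) < Real.sqrt (2 * Real.pi) := Real.sqrt_pos.2 (by positivity)
  have hs' := hs.ne'
  have hlog : Real.log (c ^ 2 / b ^ 2) = 2 * Real.log (c / b) := by
    rw [show c ^ 2 / b ^ 2 = (c / b) ^ 2 by ring, Real.log_pow]
    norm_num
  have hfeq : ∀ z, f (m * (z - d)) * m - f (z / a) * (1 / a)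
      = (Real.exp (-(m * (z - d)) ^ 2 / 2) * (c / b) - Real.exp (-(z / a) ^ 2 / 2))
        / (Real.sqrt (2 * Real.pi) * a) := by
    intro z
    simp only [f]
    rw [hm]
    field_simp
  have hDle : ∀ z, (z - zmin) * (zmax - z) ≤ 0 →
      f (m * (z - d)) * m - f (z / a) * (1 / a) ≤ 0 := by
    intro z hq
    have h1 : (z / a) ^ 2 - (m * (z - d)) ^ 2 + Real.log (c ^ 2 / b ^ 2) ≤ 0 := by
      by_contra hcon
      push_neg at hcon
      have h' := mul_pos hcon (pow_pos hb 2)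
      rw [key z] at h'
      linarith
    have h2 : Real.exp (-(m * (z - d)) ^ 2 / 2) * (c / b) ≤ Real.exp (-(z / a) ^ 2 / 2) := by
      rw [← Real.exp_log (div_pos hc hb), ← Real.exp_add]
      exact Real.exp_le_exp.2 (by linarith)
    rw [hfeq z]
    exact div_nonpos_iff.2 (Or.inr ⟨by linarith, by positivity⟩)
  have hDge : ∀ z, 0 ≤ (z - zmin) * (zmax - z) →
      0 ≤ f (m * (z - d)) * m - f (z / a) * (1 / a) := by
    intro z hq
    have h1 : 0 ≤ (z / a) ^ 2 - (m * (z - d)) ^ 2 + Real.log (c ^ 2 / b ^ 2) := by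
      by_contra hcon
      push_neg at hcon
      have h' := mul_neg_of_neg_of_pos hcon (pow_pos hb 2)
      rw [key z] at h'
      linarith
    have h2 : Real.exp (-(z / a) ^ 2 / 2) ≤ Real.exp (-(m * (z - d)) ^ 2 / 2) * (c / b) := by
      rw [← Real.exp_log (div_pos hc hb), ← Real.exp_add]
      exact Real.exp_le_exp.2 (by linarith)
    rw [hfeq z]
    exact div_nonneg (by linarith) (by positivity)
  have hGcont : Continuous G := by
    rw [hGfun]
    exact (Phi_continuous.comp (continuous_const.mul (continuous_id.sub continuous_const))).sub
      (Phi_continuous.comp (continuous_id.div_const a))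
  have hanti1 : AntitoneOn G (Iic zmin) := by
    refine antitoneOn_of_deriv_nonpos (convex_Iic zmin) hGcont.continuousOn
      (fun z _ => (hG z).differentiableAt.differentiableWithinAt) (fun z hz => ?_)
    rw [interior_Iic] at hz
    rw [(hG z).deriv]
    exact hDle z (mul_nonpos_iff.2 (Or.inr ⟨by linarith [hz.out], by linarith [hz.out, hzminmax']⟩))
  have hmono : MonotoneOn G (Icc zmin zmax) := by
    refine monotoneOn_of_deriv_nonneg (convex_Icc zmin zmax) hGcont.continuousOn
      (fun z _ => (hG z).differentiableAt.differentiableWithinAt) (fun z hz => ?_)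
    rw [interior_Icc] at hz
    rw [(hG z).deriv]
    exact hDge z (mul_nonneg (by linarith [hz.1]) (by linarith [hz.2]))
  have hanti2 : AntitoneOn G (Ici zmax) := by
    refine antitoneOn_of_deriv_nonpos (convex_Ici zmax) hGcont.continuousOn
      (fun z _ => (hG z).differentiableAt.differentiableWithinAt) (fun z hz => ?_)
    rw [interior_Ici] at hz
    rw [(hG z).deriv]
    exact hDle z (mul_nonpos_iff.2 (Or.inl ⟨by linarith [hz.out, hzminmax'], by linarith [hz.out]⟩))
  have hGtop : Tendsto G atTop (𝓝 0) := by
    rw [hGfun]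
    have hu : Tendsto (fun z : ℝ => m * (z - d)) atTop atTop := by
      have := (tendsto_atTop_add_const_right atTop (-d) tendsto_id).const_mul_atTop hm0
      refine this.congr fun z => ?_
      simp [sub_eq_add_neg]
    have hv : Tendsto (fun z : ℝ => z / a) atTop atTop := tendsto_id.atTop_div_const ha
    have := (tendsto_Phi_atTop.comp hu).sub (tendsto_Phi_atTop.comp hv)
    simpa using this
  have hux : m * (zmin - d) = b * K / (a * c) - R / a := by
    rw [hm, hd, hzmin_eq]
    field_simp
    linear_combination K * hc2
  have hvx : -(zmin / a) = -(K / a) + b * R / (a * c) := by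
    rw [hzmin_eq]
    field_simp
    ring
  have heq : G zmin + 1 = Phi (b * K / (a * c) - R / a) + Phi (-(K / a) + b * R / (a * c)) := by
    have h1 : G zmin = Phi (m * (zmin - d)) - Phi (zmin / a) := by rw [hGfun]
    rw [h1, hux, ← hvx, Phi_neg]
    ring
  have hx12 : b * K / (a * c) - R / a < -(-(K / a) + b * R / (a * c)) := by
    have h : -(-(K / a) + b * R / (a * c)) - (b * K / (a * c) - R / a)
        = (c - b) * (K + R) / (a * c) := by field_simp; ring
    have hpos : 0 < (c - b) * (K + R) / (a * c) :=
      div_pos (mul_pos (by linarith) (by linarith)) (by positivity)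
    linarith
  have hlt : G zmin + 1 < 1 := by
    rw [heq]
    have h1 := Phi_lt_Phi hx12
    have h2 := Phi_neg (-(K / a) + b * R / (a * c))
    linarith
  have hGzmin : G zmin ≤ 0 := by linarith
  have hgt : 0 < G zmin + 1 := by
    rw [heq]
    have p1 := Phi_pos (b * K / (a * c) - R / a)
    have p2 := Phi_pos (-(K / a) + b * R / (a * c))
    linarith
  refine ⟨fun z => ?_, heq, hgt, hlt⟩
  rcases le_total z zmin with h | h
  · exact hanti1 (mem_Iic.2 h) (mem_Iic.2 le_rfl) h
  · rcases le_total z zmax with h2 | h2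
    · exact hmono ⟨le_rfl, hzminmax'⟩ ⟨h, h2⟩ h
    · have h0 : 0 ≤ G z := by
        refine le_of_tendsto hGtop ?_
        filter_upwards [eventually_ge_atTop z] with t ht
        exact hanti2 (mem_Ici.2 h2) (mem_Ici.2 (h2.trans ht)) ht
      linarith
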